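/- Let n ≥ 1 be an integer, n/(n+2) < p < 1, q > n(1−p)/2, D ∈ 𝓜ₙ, u ∈ ℝⁿ, and a = (1−p)/(2p−n(1−p)). Then ∫_{ℝⁿ} f_p(D,u,x)^q dx = (a/π)^{n(q−1)/2} · (Γ(1/(1−p))/Γ(1/(1−p)−n/2))^q · Γ(q/(1−p)−n/2)/Γ(q/(1−p)) · (det D)^{(q−1)/2}. -/

import Mathlib

open MeasureTheory Matrix

section AuxLemmas

open Real Set

private lemma realBeta (a b : ℝ) (ha : 0 < a) (hb : 0 < b) :
    ∫ x in (0:ℝ)..1, x ^ (a-1) * (1-x) ^ (b-1) =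
      Real.Gamma a * Real.Gamma b / Real.Gamma (a+b) := by
  have h := Complex.Gamma_mul_Gamma_eq_betaIntegral (s := (a:ℂ)) (t := (b:ℂ))
    (by simpa using ha) (by simpa using hb)
  rw [Complex.betaIntegral] at h
  have h2 : (∫ x in (0:ℝ)..1, (x:ℂ) ^ ((a:ℂ)-1) * (1-(x:ℂ)) ^ ((b:ℂ)-1)) =
      ((∫ x in (0:ℝ)..1, x ^ (a-1) * (1-x) ^ (b-1) : ℝ) : ℂ) := by
    rw [← intervalIntegral.integral_ofReal]
    refine intervalIntegral.integral_congr_ae ?_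
    have h1 : ∀ᵐ (x:ℝ), x ≠ 1 := by
      refine ae_iff.mpr ?_
      have hset : {y : ℝ | ¬ y ≠ 1} = {1} := by ext y; simp
      rw [hset]
      exact Real.volume_singleton
    filter_upwards [h1] with x hx1 hmem
    rw [Set.uIoc_of_le (zero_le_one)] at hmem
    have hx0 : 0 < x := hmem.1
    have hx1' : x < 1 := lt_of_le_of_ne hmem.2 hx1
    have e1 : ((a:ℂ)-1) = ((a-1 : ℝ) : ℂ) := by push_cast; ring
    have e2 : ((b:ℂ)-1) = ((b-1 : ℝ) : ℂ) := by push_cast; ring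
    have e3 : (1 - (x:ℂ)) = ((1 - x : ℝ) : ℂ) := by push_cast; ring
    rw [e1, e2, e3, ← Complex.ofReal_cpow hx0.le,
      ← Complex.ofReal_cpow (by linarith : (0:ℝ) ≤ 1 - x)]
    push_cast
    ring
  rw [h2] at h
  have hG : Complex.Gamma ((a:ℂ)+(b:ℂ)) = ((Real.Gamma (a+b) : ℝ) : ℂ) := by
    rw [← Complex.ofReal_add, Complex.Gamma_ofReal]
  rw [Complex.Gamma_ofReal, Complex.Gamma_ofReal, hG, ← Complex.ofReal_mul,
    ← Complex.ofReal_mul] at h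
  have := Complex.ofReal_inj.mp h
  rw [eq_div_iff (Real.Gamma_pos_of_pos (by linarith)).ne']
  linarith [this]

private lemma betaIoi (a b : ℝ) (ha : 0 < a) (hb : 0 < b) :
    ∫ t in Ioi (0:ℝ), t ^ (a-1) * (1+t) ^ (-(a+b)) =
      Real.Gamma a * Real.Gamma b / Real.Gamma (a+b) := by
  have himg : (fun x : ℝ => x / (1 - x)) '' (Ioo 0 1) = Ioi 0 := by
    ext y
    constructor
    · rintro ⟨x, ⟨hx0, hx1⟩, rfl⟩
      exact div_pos hx0 (by linarith)
    · intro hy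
      refine ⟨y / (1 + y), ⟨div_pos hy (by linarith [mem_Ioi.mp hy]), ?_⟩, ?_⟩
      · rw [div_lt_one (by linarith [mem_Ioi.mp hy])]; linarith [mem_Ioi.mp hy]
      · have h1 : (1 : ℝ) + y ≠ 0 := by have := mem_Ioi.mp hy; positivity
        field_simp
        ring
  have hderiv : ∀ x ∈ Ioo (0:ℝ) 1, HasDerivWithinAt (fun x : ℝ => x / (1 - x))
      ((1 - x)⁻¹ ^ 2) (Ioo 0 1) x := by
    intro x hx
    have h1 : (1 : ℝ) - x ≠ 0 := by have := hx.2; intro h; linarith [sub_eq_zero.mp h]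
    have := (hasDerivAt_id x).div ((hasDerivAt_id x).const_sub 1) h1
    have h2 : HasDerivAt (fun x : ℝ => x / (1 - x))
        ((1 * (1 - id x) - id x * -1) / (1 - id x) ^ 2) x := this
    refine (h2.congr_deriv ?_).hasDerivWithinAt
    simp only [id]; field_simp; ring
  have hinj : InjOn (fun x : ℝ => x / (1 - x)) (Ioo 0 1) := by
    intro x hx y hy hxy
    have hx1 : (1:ℝ) - x ≠ 0 := by have := hx.2; intro h; linarith [sub_eq_zero.mp h]
    have hy1 : (1:ℝ) - y ≠ 0 := by have := hy.2; intro h; linarith [sub_eq_zero.mp h]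
    field_simp at hxy
    linarith
  have key := integral_image_eq_integral_abs_deriv_smul measurableSet_Ioo hderiv hinj
    (fun t => t ^ (a-1) * (1+t) ^ (-(a+b)))
  rw [himg] at key
  rw [key]
  have : ∀ x ∈ Ioo (0:ℝ) 1, |(1 - x)⁻¹ ^ 2| •
      ((x / (1-x)) ^ (a-1) * (1 + x / (1-x)) ^ (-(a+b))) = x ^ (a-1) * (1-x) ^ (b-1) := by
    intro x hx
    have hx0 := hx.1
    have hx1 : (0:ℝ) < 1 - x := by linarith [hx.2]
    have h1 : 1 + x / (1-x) = (1-x)⁻¹ := by field_simp; ring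
    rw [h1, abs_of_nonneg (by positivity), smul_eq_mul,
      Real.div_rpow hx0.le hx1.le, Real.rpow_neg (by positivity),
      Real.inv_rpow hx1.le, inv_inv, inv_pow, div_eq_mul_inv]
    have h2 : ((1-x):ℝ)^(2:ℕ) = (1-x)^((2:ℝ)) := by
      rw [← Real.rpow_natCast]; norm_num
    rw [h2, ← Real.rpow_neg hx1.le, ← Real.rpow_neg hx1.le, mul_comm, mul_assoc, mul_assoc,
      ← Real.rpow_add hx1, ← Real.rpow_add hx1]
    congr 1
    ring
  rw [setIntegral_congr_fun measurableSet_Ioo this,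
    ← MeasureTheory.integral_Ioc_eq_integral_Ioo,
    ← intervalIntegral.integral_of_le zero_le_one, realBeta a b ha hb]

private lemma radialInt (n : ℕ) (hn : 1 ≤ n) (s : ℝ) (hs : (n:ℝ)/2 < s) :
    ∫ y in Ioi (0:ℝ), y ^ (n-1) * (1+y^2) ^ (-s) =
      Real.Gamma ((n:ℝ)/2) * Real.Gamma (s - n/2) / (2 * Real.Gamma s) := by
  have hn2 : (0:ℝ) < (n:ℝ)/2 := by positivity
  set g : ℝ → ℝ := fun t => (2:ℝ)⁻¹ * (t ^ ((n:ℝ)/2 - 1) * (1+t) ^ (-s)) with hg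
  have key := integral_comp_rpow_Ioi g (p := 2) two_ne_zero
  have congr1 : ∀ y ∈ Ioi (0:ℝ), (|(2:ℝ)| * y ^ ((2:ℝ) - 1)) • g (y ^ (2:ℝ)) =
      y ^ (n-1) * (1+y^2) ^ (-s) := by
    intro y hy
    have hy0 : (0:ℝ) < y := hy
    have h2 : y ^ ((2:ℝ)) = y ^ (2:ℕ) := by
      rw [← Real.rpow_natCast]; norm_num
    have h3 : ((y:ℝ) ^ (2:ℕ)) ^ ((n:ℝ)/2 - 1) = y ^ ((n:ℝ) - 2) := by
      rw [← Real.rpow_natCast y 2, ← Real.rpow_mul hy0.le]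
      norm_num
      ring_nf
    have h4 : y ^ ((2:ℝ) - 1) = y := by norm_num
    have h5 : (y:ℝ) ^ (n-1) = y ^ ((n:ℝ) - 1) := by
      rw [← Real.rpow_natCast y (n-1), Nat.cast_sub hn]
      norm_num
    have h7 : y * y ^ ((n:ℝ)-2) = y ^ ((n:ℝ)-1) := by
      nth_rewrite 1 [← Real.rpow_one y]
      rw [← Real.rpow_add hy0]
      congr 1
      ring
    simp only [hg, smul_eq_mul]
    rw [abs_of_nonneg (by norm_num : (0:ℝ) ≤ 2), h2, h3, h4, h5, ← h7]
    ring
  rw [setIntegral_congr_fun measurableSet_Ioi congr1] at key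
  rw [key]
  simp only [hg]
  have hbeta := betaIoi ((n:ℝ)/2) (s - n/2) hn2 (by linarith)
  have hsum : (n:ℝ)/2 + (s - n/2) = s := by ring
  have : ∀ t : ℝ, (2:ℝ)⁻¹ * (t ^ ((n:ℝ)/2 - 1) * (1+t) ^ (-s)) =
      (2:ℝ)⁻¹ * (t ^ ((n:ℝ)/2 - 1) * (1+t) ^ (-((n:ℝ)/2 + (s - n/2)))) := by
    intro t; rw [hsum]
  simp_rw [this]
  rw [integral_const_mul, hbeta, hsum]
  field_simp

private lemma euclInt (n : ℕ) (hn : 1 ≤ n) (s : ℝ) (hs : (n:ℝ)/2 < s) :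
    ∫ x : EuclideanSpace ℝ (Fin n), (1 + ‖x‖^2) ^ (-s) =
      Real.pi ^ ((n:ℝ)/2) * Real.Gamma (s - n/2) / Real.Gamma s := by
  haveI : Nonempty (Fin n) := ⟨⟨0, hn⟩⟩
  haveI : Nontrivial (EuclideanSpace ℝ (Fin n)) := by infer_instance
  have key := MeasureTheory.integral_fun_norm_addHaar
    (volume : Measure (EuclideanSpace ℝ (Fin n))) (fun r => (1 + r^2) ^ (-s))
  simp only [finrank_euclideanSpace, Fintype.card_fin] at key
  rw [key]
  rw [measureReal_def, EuclideanSpace.volume_ball (x := (0 : EuclideanSpace ℝ (Fin n))) (r := 1)]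
  simp only [Fintype.card_fin, ENNReal.ofReal_one, one_pow, one_mul]
  rw [ENNReal.toReal_ofReal (by positivity)]
  have hrad := radialInt n hn s hs
  have : (∫ y in Ioi (0:ℝ), y ^ (n-1) • (1+y^2) ^ (-s)) =
      ∫ y in Ioi (0:ℝ), y ^ (n-1) * (1+y^2) ^ (-s) := by
    simp_rw [smul_eq_mul]
  rw [nsmul_eq_mul, smul_eq_mul, this, hrad]
  have hπ : Real.sqrt π ^ n = π ^ ((n:ℝ)/2) := by
    rw [Real.sqrt_eq_rpow, ← Real.rpow_natCast (π ^ ((1:ℝ)/2)) n, ← Real.rpow_mul Real.pi_pos.le]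
    ring_nf
  have hΓ : Real.Gamma ((n:ℝ)/2 + 1) = ((n:ℝ)/2) * Real.Gamma ((n:ℝ)/2) := by
    rw [Real.Gamma_add_one (by positivity : ((n:ℝ)/2) ≠ 0)]
  have hΓpos : 0 < Real.Gamma ((n:ℝ)/2) := Real.Gamma_pos_of_pos (by positivity)
  have hΓspos : 0 < Real.Gamma s :=
    Real.Gamma_pos_of_pos (by linarith [show (0:ℝ) < (n:ℝ)/2 by positivity])
  rw [hπ, hΓ]
  have hn0 : (0:ℝ) < (n:ℝ) := by exact_mod_cast hn
  field_simp

private lemma piInt (n : ℕ) (hn : 1 ≤ n) (s : ℝ) (hs : (n:ℝ)/2 < s) :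
    ∫ x : Fin n → ℝ, (1 + x ⬝ᵥ x) ^ (-s) =
      Real.pi ^ ((n:ℝ)/2) * Real.Gamma (s - n/2) / Real.Gamma s := by
  have hmp := EuclideanSpace.volume_preserving_symm_measurableEquiv_toLp (Fin n)
  rw [← hmp.integral_comp (MeasurableEquiv.toLp 2 (Fin n → ℝ)).symm.measurableEmbedding
    (fun x : Fin n → ℝ => (1 + x ⬝ᵥ x) ^ (-s)), ← euclInt n hn s hs]
  refine integral_congr_ae (Filter.Eventually.of_forall fun x => ?_)
  simp only
  congr 2
  rw [EuclideanSpace.norm_eq, Real.sq_sqrt (by positivity)]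
  simp [dotProduct, pow_two]

private lemma integral_comp_linEquiv {n : ℕ} (e : (Fin n → ℝ) ≃ₗ[ℝ] (Fin n → ℝ))
    (f : (Fin n → ℝ) → ℝ) :
    ∫ x : Fin n → ℝ, f (e x) =
      |LinearMap.det (e : (Fin n → ℝ) →ₗ[ℝ] (Fin n → ℝ))|⁻¹ * ∫ x, f x := by
  have hdet : LinearMap.det (e : (Fin n → ℝ) →ₗ[ℝ] (Fin n → ℝ)) ≠ 0 :=
    (LinearEquiv.isUnit_det' e).ne_zero
  set mequiv := e.toContinuousLinearEquiv.toHomeomorph.toMeasurableEquiv with hme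
  have h1 : ∫ y, f y ∂(Measure.map (⇑mequiv) volume) = ∫ x, f (mequiv x) :=
    integral_map_equiv mequiv f
  have hfun : ⇑mequiv = ⇑((e : (Fin n → ℝ) →ₗ[ℝ] (Fin n → ℝ))) := rfl
  rw [hfun] at h1
  rw [Measure.map_linearMap_addHaar_eq_smul_addHaar volume hdet, integral_smul_measure,
    ENNReal.toReal_ofReal (abs_nonneg _), smul_eq_mul, abs_inv] at h1
  exact h1.symm

open scoped MatrixOrder in
private lemma quadInt (n : ℕ) (D : Matrix (Fin n) (Fin n) ℝ) (hD : D.PosDef) (c : ℝ)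
    (hc : 0 < c) (f : ℝ → ℝ) :
    ∫ x : Fin n → ℝ, f (c * (x ⬝ᵥ D.mulVec x)) =
      (c ^ ((n:ℝ)/2) * Real.sqrt D.det)⁻¹ * ∫ x : Fin n → ℝ, f (x ⬝ᵥ x) := by
  classical
  set S := CFC.sqrt D with hSdef
  have hS : S.PosSemidef := (CFC.sqrt_nonneg D).posSemidef
  have hSS : S * S = D := CFC.sqrt_mul_sqrt_self D hD.posSemidef.nonneg
  have hdetSnn : 0 ≤ S.det := by
    rw [hS.1.det_eq_prod_eigenvalues]
    exact Finset.prod_nonneg fun i _ => hS.eigenvalues_nonneg i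
  have hdetS_sq : S.det * S.det = D.det := by rw [← det_mul, hSS]
  have hdetS : S.det = Real.sqrt D.det := by
    rw [← hdetS_sq, Real.sqrt_mul_self hdetSnn]
  have hdetD : 0 < D.det := hD.det_pos
  have hdetSpos : 0 < S.det := by rw [hdetS]; positivity
  set M : Matrix (Fin n) (Fin n) ℝ := Real.sqrt c • S with hMdef
  have hdetM : M.det = c ^ ((n:ℝ)/2) * Real.sqrt D.det := by
    rw [hMdef, det_smul, hdetS]
    congr 1
    rw [Fintype.card_fin, Real.sqrt_eq_rpow, ← Real.rpow_natCast (c ^ ((1:ℝ)/2)) n,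
      ← Real.rpow_mul hc.le]
    ring_nf
  have hdetMpos : 0 < M.det := by rw [hdetM]; positivity
  have hinv : Invertible M := M.invertibleOfIsUnitDet (isUnit_iff_ne_zero.mpr hdetMpos.ne')
  set e := M.toLinearEquiv' hinv with hedef
  have key := integral_comp_linEquiv e (fun y => f (y ⬝ᵥ y))
  have he : ∀ x, e x = M.mulVec x := fun x => rfl
  have hquad : ∀ x : Fin n → ℝ, (M.mulVec x) ⬝ᵥ (M.mulVec x) = c * (x ⬝ᵥ D.mulVec x) := by
    intro x
    rw [hMdef, smul_mulVec, smul_dotProduct, dotProduct_smul, smul_eq_mul, smul_eq_mul,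
      ← mul_assoc, Real.mul_self_sqrt hc.le]
    congr 1
    have hsymm : Sᵀ = S := by
      have := hS.1
      rwa [IsHermitian, conjTranspose_eq_transpose_of_trivial] at this
    calc (S.mulVec x) ⬝ᵥ (S.mulVec x) = x ᵥ* S ⬝ᵥ S.mulVec x := by
            rw [← mulVec_transpose, hsymm]
      _ = x ⬝ᵥ S.mulVec (S.mulVec x) := (dotProduct_mulVec x S (S.mulVec x)).symm
      _ = x ⬝ᵥ D.mulVec x := by rw [mulVec_mulVec, hSS]
  have hLdet : LinearMap.det (e : (Fin n → ℝ) →ₗ[ℝ] (Fin n → ℝ)) = M.det := by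
    have : (e : (Fin n → ℝ) →ₗ[ℝ] (Fin n → ℝ)) = Matrix.toLin' M := by
      ext x
      simp [hedef, Matrix.toLinearEquiv'_apply]
    rw [this, LinearMap.det_toLin']
  simp only [he, hquad] at key
  rw [key, hLdet, abs_of_pos hdetMpos, hdetM]

private lemma arith (a d g1 g2 g3 g4 q nr : ℝ) (ha : 0 < a) (hd : 0 < d) (h1 : 0 < g1)
    (h2 : 0 < g2) (h3 : 0 < g3) (h4 : 0 < g4) :
    (a ^ (nr/2) * g1 / (Real.pi ^ (nr/2) * g2) * Real.sqrt d) ^ q *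
      ((a ^ (nr/2) * Real.sqrt d)⁻¹ * (Real.pi ^ (nr/2) * g3 / g4)) =
    (a / Real.pi) ^ (nr * (q-1) / 2) * (g1 / g2) ^ q * (g3 / g4) * d ^ ((q-1)/2) := by
  have hπ := Real.pi_pos
  have hL : (0:ℝ) < (a ^ (nr/2) * g1 / (Real.pi ^ (nr/2) * g2) * Real.sqrt d) ^ q *
      ((a ^ (nr/2) * Real.sqrt d)⁻¹ * (Real.pi ^ (nr/2) * g3 / g4)) := by positivity
  have hR : (0:ℝ) < (a / Real.pi) ^ (nr * (q-1) / 2) * (g1 / g2) ^ q * (g3 / g4) *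
      d ^ ((q-1)/2) := by positivity
  refine Real.log_injOn_pos (Set.mem_Ioi.mpr hL) (Set.mem_Ioi.mpr hR) ?_
  simp (disch := positivity) only [Real.log_mul, Real.log_div, Real.log_inv, Real.log_rpow,
    Real.log_sqrt, ne_eq, Real.log_pow]
  ring

end AuxLemmas

/-- Normalization constant `A_{n,p}` for `n/(n+2) < p < 1`. -/
noncomputable def gaussA (n : ℕ) (p : ℝ) : ℝ :=
  ((1 - p) / (2 * p - n * (1 - p))) ^ ((n : ℝ) / 2) *
    Real.Gamma (1 / (1 - p)) /
    (Real.pi ^ ((n : ℝ) / 2) * Real.Gamma (1 / (1 - p) - n / 2))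

/-- The `p`-Gaussian density for `n/(n+2) < p < 1`. -/
noncomputable def gaussF (n : ℕ) (p : ℝ) (D : Matrix (Fin n) (Fin n) ℝ)
    (u x : Fin n → ℝ) : ℝ :=
  gaussA n p * Real.sqrt D.det *
    (1 + (1 - p) / (2 * p - n * (1 - p)) * ((x - u) ⬝ᵥ D.mulVec (x - u))) ^ (1 / (p - 1))

/-- the integral of `f_p(D,u,·)^q` for `n/(n+2) < p < 1`, `q > n(1−p)/2`,
with `a = (1−p)/(2p−n(1−p))`. -/
theorem integral_gaussF_rpow (n : ℕ) (hn : 1 ≤ n) (p q : ℝ)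
    (hp₁ : (n : ℝ) / (n + 2) < p) (hp₂ : p < 1) (hq : (n : ℝ) * (1 - p) / 2 < q)
    (D : Matrix (Fin n) (Fin n) ℝ) (hD : D.PosDef) (u : Fin n → ℝ) :
    ∫ x : Fin n → ℝ, gaussF n p D u x ^ q =
      ((1 - p) / (2 * p - n * (1 - p)) / Real.pi) ^ ((n : ℝ) * (q - 1) / 2) *
        (Real.Gamma (1 / (1 - p)) / Real.Gamma (1 / (1 - p) - n / 2)) ^ q *
        (Real.Gamma (q / (1 - p) - n / 2) / Real.Gamma (q / (1 - p))) *
        D.det ^ ((q - 1) / 2) := by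
  have hp0 : (0:ℝ) < 1 - p := by linarith
  have hn0 : (0:ℝ) < (n:ℝ) := by exact_mod_cast hn
  have hnp2 : (0:ℝ) < (n:ℝ) + 2 := by positivity
  have hmul : (n:ℝ) < p * ((n:ℝ) + 2) := (div_lt_iff₀ hnp2).mp hp₁
  have hden : (0:ℝ) < 2 * p - n * (1 - p) := by nlinarith
  set a : ℝ := (1 - p) / (2 * p - n * (1 - p)) with ha_def
  have ha : 0 < a := div_pos hp0 hden
  set s : ℝ := q / (1 - p) with hs_def
  have hs : (n:ℝ)/2 < s := by
    rw [hs_def, div_lt_div_iff₀ two_pos hp0]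
    linarith
  have hq0 : 0 < q := by nlinarith
  have hspos : 0 < s := div_pos hq0 hp0
  have hg1pos : 0 < Real.Gamma (1 / (1 - p)) := Real.Gamma_pos_of_pos (by positivity)
  have hnp2' : (n:ℝ) * (1 - p) < 2 := by nlinarith
  have hg2arg : 0 < 1 / (1 - p) - (n:ℝ) / 2 := by
    rw [sub_pos, div_lt_div_iff₀ two_pos hp0]
    linarith
  have hg2pos : 0 < Real.Gamma (1 / (1 - p) - n / 2) := Real.Gamma_pos_of_pos hg2arg
  have hg3pos : 0 < Real.Gamma (s - n / 2) := Real.Gamma_pos_of_pos (by linarith)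
  have hg4pos : 0 < Real.Gamma s := Real.Gamma_pos_of_pos hspos
  have hdetD : 0 < D.det := hD.det_pos
  have hQnn : ∀ v : Fin n → ℝ, 0 ≤ v ⬝ᵥ D.mulVec v := fun v => by
    simpa using hD.posSemidef.re_dotProduct_nonneg v
  have hA : 0 < gaussA n p := by
    rw [gaussA]
    have := Real.pi_pos
    positivity
  -- pointwise identity
  have hp1ne : p - 1 ≠ 0 := by intro h; linarith [sub_eq_zero.mp h]
  have hpt : ∀ x : Fin n → ℝ, gaussF n p D u x ^ q =
      (gaussA n p * Real.sqrt D.det) ^ q *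
        (1 + a * ((x - u) ⬝ᵥ D.mulVec (x - u))) ^ (-s) := by
    intro x
    rw [gaussF, ← ha_def]
    have ht : (0:ℝ) ≤ 1 + a * ((x - u) ⬝ᵥ D.mulVec (x - u)) := by
      have := hQnn (x - u)
      positivity
    have hexp : 1 / (p - 1) * q = -s := by
      rw [hs_def]
      field_simp
      ring
    rw [Real.mul_rpow (by positivity) (Real.rpow_nonneg ht _), ← Real.rpow_mul ht, hexp]
  calc ∫ x : Fin n → ℝ, gaussF n p D u x ^ q
      = ∫ x : Fin n → ℝ, (gaussA n p * Real.sqrt D.det) ^ q *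
          (1 + a * ((x - u) ⬝ᵥ D.mulVec (x - u))) ^ (-s) := by simp only [hpt]
    _ = (gaussA n p * Real.sqrt D.det) ^ q *
          ∫ x : Fin n → ℝ, (1 + a * ((x - u) ⬝ᵥ D.mulVec (x - u))) ^ (-s) :=
        integral_const_mul _ _
    _ = (gaussA n p * Real.sqrt D.det) ^ q *
          ∫ x : Fin n → ℝ, (1 + a * (x ⬝ᵥ D.mulVec x)) ^ (-s) := by
        have htrans := integral_sub_right_eq_self (μ := volume)
          (fun y : Fin n → ℝ => (1 + a * (y ⬝ᵥ D.mulVec y)) ^ (-s)) u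
        rw [htrans]
    _ = (gaussA n p * Real.sqrt D.det) ^ q *
          ((a ^ ((n:ℝ)/2) * Real.sqrt D.det)⁻¹ *
            (Real.pi ^ ((n:ℝ)/2) * Real.Gamma (s - n/2) / Real.Gamma s)) := by
        have hq2 := quadInt n D hD a ha (fun t => (1 + t) ^ (-s))
        rw [hq2, piInt n hn s hs]
    _ = (a / Real.pi) ^ ((n : ℝ) * (q - 1) / 2) *
          (Real.Gamma (1 / (1 - p)) / Real.Gamma (1 / (1 - p) - n / 2)) ^ q *
          (Real.Gamma (s - n / 2) / Real.Gamma s) *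
          D.det ^ ((q - 1) / 2) := by
        rw [gaussA, ← ha_def]
        exact arith a D.det (Real.Gamma (1 / (1 - p))) (Real.Gamma (1 / (1 - p) - n / 2))
          (Real.Gamma (s - n / 2)) (Real.Gamma s) q n ha hdetD hg1pos hg2pos hg3pos hg4pos
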